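/- Unbiasedness of the RS+FD[GRR] estimator (Theorem 'est_grr'): let d ≥ 1 and c ≥ 2 be integers, p, q ∈ [0,1] with p ≠ q and q = (1−p)/(c−1), and let n be a positive integer. Suppose that among the n users exactly f·n hold the value v (where 0 ≤ f ≤ 1 and f·n is an integer) and each user independently reports v (for the attribute under estimation) with probability p/d + (d−1)/(d·c) if it holds v and with probability q/d + (d−1)/(d·c) otherwise. Then the estimator f̂ = (N·d·c − n·(d−1+q·c))/(n·c·(p−q)), where N is the number of users whose report equals v, satisfies E[f̂] = f. -/

import Mathlib

open MeasureTheory ProbabilityTheory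

/-- Unbiasedness of the RS+FD[GRR] estimator (Theorem `est_grr`). -/
theorem est_grr
    {Ω : Type*} [MeasureSpace Ω] [IsProbabilityMeasure (ℙ : Measure Ω)]
    (d c : ℕ) (hd : 1 ≤ d) (hc : 2 ≤ c)
    (p q : ℝ) (hp : 0 ≤ p ∧ p ≤ 1) (hq : 0 ≤ q ∧ q ≤ 1) (hpq : p ≠ q)
    (hqdef : q = (1 - p) / ((c : ℝ) - 1))
    (n : ℕ) (hn : 0 < n)
    (f : ℝ) (hf0 : 0 ≤ f) (hf1 : f ≤ 1)
    (holds : Fin n → Bool)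
    (hcount : (∑ i, if holds i then (1 : ℝ) else 0) = f * n)
    (report : Fin n → Ω → Bool)
    (hmeas : ∀ i, Measurable (report i))
    (hindep : iIndepFun report ℙ)
    (hps : ∀ i, holds i = true →
      ℙ {ω | report i ω = true}
        = ENNReal.ofReal (p / (d : ℝ) + ((d : ℝ) - 1) / ((d : ℝ) * (c : ℝ))))
    (hqs : ∀ i, holds i = false →
      ℙ {ω | report i ω = true}
        = ENNReal.ofReal (q / (d : ℝ) + ((d : ℝ) - 1) / ((d : ℝ) * (c : ℝ)))) :
    ∫ ω, ((∑ i, if report i ω then (1 : ℝ) else 0) * (d : ℝ) * (c : ℝ)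
        - (n : ℝ) * ((d : ℝ) - 1 + q * (c : ℝ)))
        / ((n : ℝ) * (c : ℝ) * (p - q)) ∂ℙ = f := by
  have hd' : (1:ℝ) ≤ (d:ℝ) := by exact_mod_cast hd
  have hc' : (2:ℝ) ≤ (c:ℝ) := by exact_mod_cast hc
  have hd0 : (0:ℝ) < d := by linarith
  have hc0 : (0:ℝ) < c := by linarith
  have hn' : (0:ℝ) < n := by exact_mod_cast hn
  set pp : ℝ := p / d + ((d:ℝ) - 1) / (d * c) with hppdef
  set qp : ℝ := q / d + ((d:ℝ) - 1) / (d * c) with hqpdef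
  have hdm1 : (0:ℝ) ≤ (d:ℝ) - 1 := by linarith
  have hpp0 : 0 ≤ pp :=
    add_nonneg (div_nonneg hp.1 hd0.le) (div_nonneg hdm1 (by positivity))
  have hqp0 : 0 ≤ qp :=
    add_nonneg (div_nonneg hq.1 hd0.le) (div_nonneg hdm1 (by positivity))
  have hset : ∀ i, MeasurableSet {ω | report i ω = true} := fun i =>
    (hmeas i) (measurableSet_singleton true)
  have hrepr : ∀ i, (fun ω => if report i ω then (1:ℝ) else 0)
      = Set.indicator {ω | report i ω = true} (fun _ => (1:ℝ)) := by
    intro i; ext ω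
    by_cases h : report i ω <;> simp [Set.indicator, h]
  have hint : ∀ i, Integrable (fun ω => if report i ω then (1:ℝ) else 0) ℙ := by
    intro i; rw [hrepr i]
    exact (integrable_const (1:ℝ)).indicator (hset i)
  have hval : ∀ i, ∫ ω, (if report i ω then (1:ℝ) else 0) ∂ℙ
      = (if holds i then pp else qp) := by
    intro i
    have : ∫ ω, (if report i ω then (1:ℝ) else 0) ∂ℙ
        = (ℙ {ω | report i ω = true}).toReal := by
      rw [hrepr i]
      exact integral_indicator_one (μ := ℙ) (hset i)
    rw [this]
    by_cases h : holds i
    · rw [hps i h, if_pos h, ENNReal.toReal_ofReal hpp0]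
    · rw [hqs i (by simpa using h), if_neg h, ENNReal.toReal_ofReal hqp0]
  have hsum : ∫ ω, (∑ i, if report i ω then (1:ℝ) else 0) ∂ℙ
      = (n:ℝ) * qp + f * n * (pp - qp) := by
    rw [integral_finset_sum _ (fun i _ => hint i)]
    have h1 : ∀ i : Fin n, ∫ ω, (if report i ω then (1:ℝ) else 0) ∂ℙ
        = qp + (if holds i then (1:ℝ) else 0) * (pp - qp) := by
      intro i; rw [hval i]; by_cases h : holds i <;> simp [h] <;> ring
    simp_rw [h1]
    rw [Finset.sum_add_distrib, Finset.sum_const, ← Finset.sum_mul, hcount]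
    simp [Finset.card_univ]
  have hS : Integrable (fun ω => ∑ i, if report i ω then (1:ℝ) else 0) ℙ :=
    integrable_finset_sum _ (fun i _ => hint i)
  rw [integral_div, integral_sub ((hS.mul_const _).mul_const _) (integrable_const _),
    integral_mul_const, integral_mul_const, hsum, integral_const]
  simp only [probReal_univ, measure_univ, ENNReal.toReal_one, one_smul]
  rw [hppdef, hqpdef]
  have hpq' : p - q ≠ 0 := sub_ne_zero.2 hpq
  field_simp
  ring
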